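/- (Resolution of default cascades in the finite system.) Fix a time t and consider n banks with left-limit states X_i(t−) ≥ 0 for i in the alive set A_{t−} = {i : t ≤ τ_i}, vectors 𝐮_i, 𝐯_i ∈ ℝ^k with n^{-1}Σ_{l=1}^k v_{li}u_{jl} = λ_{ji} ≥ 0 for all i,j, the shift map Θ(t;f,y) := F(Σ_j y_j ∫₀^{t−}g d𝓛^n_j + g(t)f(y)) − F(Σ_j y_j ∫₀^{t−}g d𝓛^n_j) with F Lipschitz increasing, F(0)=0, and g nonnegative, and the update map Ξ(t;f,x) := Σ_{l=1}^k x_l (1/n)Σ_{j=1}^n u_{jl} 1{X_j(t−) ∈ [0, Θ(t;f,𝐯_j)], t ≤ τ_j}. Define the iterates Δ⁰_{t,v} := Ξ(t;0,v) and Δ^m_{t,v} := Ξ(t;Δ^{m−1}_{t,·},v). Then for each v the sequence (Δ^m_{t,v})_{m=0,…,n} is increasing in m, and there exists m̄ ≤ n such that Δ^m_{t,v} = Δ^{m̄}_{t,v} for all m ≥ m̄ and all v ∈ {𝐯₁,…,𝐯_n}, with Ξ(t;Δ^{m̄}_{t,·},v) = Δ^{m̄}_{t,v}; hence the cascade condition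 ΔL^n_v(t) := lim_{m→n} Δ^m_{t,v} is well-defined and the map v ↦ ΔL^n_v(t) is a fixed point of f ↦ Ξ(t;f,·). -/

import Mathlib

open scoped Classical

noncomputable section

/-- The shift map `Θ(t; f, y) = F(Σ_j y_j I_j + g(t)·f(y)) − F(Σ_j y_j I_j)`, where
`I_j = ∫₀^{t−} g d𝓛ⁿ_j` are the accumulated (left-limit) weighted losses. -/
def cascadeTheta (k : ℕ) (F : ℝ → ℝ) (gt : ℝ) (I : Fin k → ℝ)
    (f : (Fin k → ℝ) → ℝ) (y : Fin k → ℝ) : ℝ :=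
  F ((∑ j, y j * I j) + gt * f y) - F (∑ j, y j * I j)

/-- The cascade update map
`Ξ(t; f, x) = Σ_l x_l (1/n) Σ_j u_{jl} 1{X_j(t−) ∈ [0, Θ(t;f,v_j)], t ≤ τ_j}`,
where `alive j` encodes `t ≤ τ_j` and `ξ j = X_j(t−)`. -/
def cascadeXi (n k : ℕ) (F : ℝ → ℝ) (gt : ℝ) (I : Fin k → ℝ)
    (u v : Fin n → Fin k → ℝ) (alive : Fin n → Prop) (ξ : Fin n → ℝ)
    (f : (Fin k → ℝ) → ℝ) (x : Fin k → ℝ) : ℝ :=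
  ∑ l, x l * ((1 / (n : ℝ)) * ∑ j, u j l *
    (if alive j ∧ 0 ≤ ξ j ∧ ξ j ≤ cascadeTheta k F gt I f (v j) then 1 else 0))

/-- The cascade iterates `Δ⁰ = Ξ(t;0,·)`, `Δᵐ = Ξ(t;Δ^{m−1},·)`. -/
def cascadeDelta (n k : ℕ) (F : ℝ → ℝ) (gt : ℝ) (I : Fin k → ℝ)
    (u v : Fin n → Fin k → ℝ) (alive : Fin n → Prop) (ξ : Fin n → ℝ) :
    ℕ → (Fin k → ℝ) → ℝ
  | 0 => cascadeXi n k F gt I u v alive ξ (fun _ => 0)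
  | m + 1 => cascadeXi n k F gt I u v alive ξ
      (cascadeDelta n k F gt I u v alive ξ m)

end

section CascadeAux

open Finset

variable {n k : ℕ} {F : ℝ → ℝ} {gt : ℝ} {I : Fin k → ℝ}
  {u v : Fin n → Fin k → ℝ} {alive : Fin n → Prop} {ξ : Fin n → ℝ}

lemma cascadeTheta_mono (hFmono : Monotone F) (hgt : 0 ≤ gt)
    {f f' : (Fin k → ℝ) → ℝ} {y : Fin k → ℝ} (h : f y ≤ f' y) :
    cascadeTheta k F gt I f y ≤ cascadeTheta k F gt I f' y := by
  unfold cascadeTheta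
  have h2 : gt * f y ≤ gt * f' y := mul_le_mul_of_nonneg_left h hgt
  have := hFmono (by linarith :
    (∑ j, y j * I j) + gt * f y ≤ (∑ j, y j * I j) + gt * f' y)
  linarith

lemma cascadeInd_mono (hFmono : Monotone F) (hgt : 0 ≤ gt)
    {f f' : (Fin k → ℝ) → ℝ} (h : ∀ j, f (v j) ≤ f' (v j)) (j : Fin n) :
    (if alive j ∧ 0 ≤ ξ j ∧ ξ j ≤ cascadeTheta k F gt I f (v j) then (1:ℝ) else 0)
      ≤ (if alive j ∧ 0 ≤ ξ j ∧ ξ j ≤ cascadeTheta k F gt I f' (v j) then (1:ℝ) else 0) := by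
  by_cases hc : alive j ∧ 0 ≤ ξ j ∧ ξ j ≤ cascadeTheta k F gt I f (v j)
  · have hc' : alive j ∧ 0 ≤ ξ j ∧ ξ j ≤ cascadeTheta k F gt I f' (v j) :=
      ⟨hc.1, hc.2.1, hc.2.2.trans (cascadeTheta_mono hFmono hgt (h j))⟩
    simp [hc, hc']
  · simp only [hc, if_false]
    split <;> norm_num

lemma cascadeXi_eq (lam : Fin n → Fin n → ℝ)
    (hlam : ∀ i j : Fin n, (1 / (n : ℝ)) * ∑ l, v i l * u j l = lam j i)
    (f : (Fin k → ℝ) → ℝ) (i : Fin n) :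
    cascadeXi n k F gt I u v alive ξ f (v i)
      = ∑ j, lam j i *
        (if alive j ∧ 0 ≤ ξ j ∧ ξ j ≤ cascadeTheta k F gt I f (v j) then (1:ℝ) else 0) := by
  unfold cascadeXi
  simp only [Finset.mul_sum]
  rw [Finset.sum_comm]
  refine Finset.sum_congr rfl fun j _ => ?_
  rw [← hlam i j, Finset.mul_sum, Finset.sum_mul]
  exact Finset.sum_congr rfl fun l _ => by ring

lemma cascadeXi_nonneg (lam : Fin n → Fin n → ℝ)
    (hlam : ∀ i j : Fin n, (1 / (n : ℝ)) * ∑ l, v i l * u j l = lam j i)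
    (hlam_nonneg : ∀ i j : Fin n, 0 ≤ lam j i)
    (f : (Fin k → ℝ) → ℝ) (i : Fin n) :
    0 ≤ cascadeXi n k F gt I u v alive ξ f (v i) := by
  rw [cascadeXi_eq lam hlam]
  refine Finset.sum_nonneg fun j _ => mul_nonneg (hlam_nonneg i j) ?_
  split <;> norm_num

lemma cascadeXi_mono (hFmono : Monotone F) (hgt : 0 ≤ gt)
    (lam : Fin n → Fin n → ℝ)
    (hlam : ∀ i j : Fin n, (1 / (n : ℝ)) * ∑ l, v i l * u j l = lam j i)
    (hlam_nonneg : ∀ i j : Fin n, 0 ≤ lam j i)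
    {f f' : (Fin k → ℝ) → ℝ} (h : ∀ j, f (v j) ≤ f' (v j)) (i : Fin n) :
    cascadeXi n k F gt I u v alive ξ f (v i)
      ≤ cascadeXi n k F gt I u v alive ξ f' (v i) := by
  rw [cascadeXi_eq lam hlam, cascadeXi_eq lam hlam]
  exact Finset.sum_le_sum fun j _ =>
    mul_le_mul_of_nonneg_left (cascadeInd_mono hFmono hgt h j) (hlam_nonneg i j)

lemma cascadeXi_congr (hFmono : Monotone F) (hgt : 0 ≤ gt)
    (lam : Fin n → Fin n → ℝ)
    (hlam : ∀ i j : Fin n, (1 / (n : ℝ)) * ∑ l, v i l * u j l = lam j i)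
    (hlam_nonneg : ∀ i j : Fin n, 0 ≤ lam j i)
    {f f' : (Fin k → ℝ) → ℝ} (h : ∀ j, f (v j) = f' (v j)) (i : Fin n) :
    cascadeXi n k F gt I u v alive ξ f (v i)
      = cascadeXi n k F gt I u v alive ξ f' (v i) :=
  le_antisymm
    (cascadeXi_mono hFmono hgt lam hlam hlam_nonneg (fun j => (h j).le) i)
    (cascadeXi_mono hFmono hgt lam hlam hlam_nonneg (fun j => (h j).ge) i)

end CascadeAux

/-- resolution of default cascades in the finite system: the cascade
iterates are increasing in `m` and stabilise after at most `n` rounds at a fixed point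
of `Ξ(t;·,·)`; hence the cascade condition `ΔLⁿ_v(t) = lim_{m→n} Δᵐ_{t,v}` is
well-defined and `v ↦ ΔLⁿ_v(t)` is a fixed point of `f ↦ Ξ(t;f,·)`. -/
theorem finite_cascade_resolution
    (n k : ℕ) (hn : 0 < n)
    (F : ℝ → ℝ) (KF : NNReal) (hFlip : LipschitzWith KF F) (hFmono : Monotone F)
    (hF0 : F 0 = 0)
    (gt : ℝ) (hgt : 0 ≤ gt)
    (I : Fin k → ℝ) (hI : ∀ j, 0 ≤ I j)
    (u v : Fin n → Fin k → ℝ)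
    (lam : Fin n → Fin n → ℝ)
    (hlam : ∀ i j : Fin n, (1 / (n : ℝ)) * ∑ l, v i l * u j l = lam j i)
    (hlam_nonneg : ∀ i j : Fin n, 0 ≤ lam j i)
    (alive : Fin n → Prop)
    (ξ : Fin n → ℝ) (hξ : ∀ i, alive i → 0 ≤ ξ i) :
    (∀ (i : Fin n) (m : ℕ),
        cascadeDelta n k F gt I u v alive ξ m (v i) ≤
          cascadeDelta n k F gt I u v alive ξ (m + 1) (v i)) ∧
    (∃ mbar : ℕ, mbar ≤ n ∧
      (∀ m : ℕ, mbar ≤ m → ∀ i : Fin n,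
        cascadeDelta n k F gt I u v alive ξ m (v i) =
          cascadeDelta n k F gt I u v alive ξ mbar (v i)) ∧
      (∀ i : Fin n,
        cascadeXi n k F gt I u v alive ξ
            (cascadeDelta n k F gt I u v alive ξ mbar) (v i) =
          cascadeDelta n k F gt I u v alive ξ mbar (v i))) ∧
    (∀ i : Fin n,
      cascadeXi n k F gt I u v alive ξ
          (cascadeDelta n k F gt I u v alive ξ n) (v i) =
        cascadeDelta n k F gt I u v alive ξ n (v i)) := by
  classical
  -- the "previous-round" functions: fseq 0 = 0, fseq (m+1) = Δ^m
  set Δ := cascadeDelta n k F gt I u v alive ξ with hΔ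
  set Ξ := cascadeXi n k F gt I u v alive ξ with hΞ
  let fseq : ℕ → (Fin k → ℝ) → ℝ := fun m =>
    match m with
    | 0 => fun _ => 0
    | m + 1 => Δ m
  have hDelta_eq : ∀ m, Δ m = Ξ (fseq m) := by
    intro m
    cases m with
    | zero => rfl
    | succ m => rfl
  -- Part 1: monotonicity of fseq on the v's
  have hfseq_step : ∀ m j, fseq m (v j) ≤ fseq (m + 1) (v j) := by
    intro m
    induction m with
    | zero =>
      intro j
      show (0:ℝ) ≤ Δ 0 (v j)
      rw [hDelta_eq 0]
      exact cascadeXi_nonneg lam hlam hlam_nonneg _ j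
    | succ m ih =>
      intro j
      show Δ m (v j) ≤ Δ (m + 1) (v j)
      rw [hDelta_eq m, hDelta_eq (m + 1)]
      exact cascadeXi_mono hFmono hgt lam hlam hlam_nonneg ih j
  have part1 : ∀ (i : Fin n) (m : ℕ), Δ m (v i) ≤ Δ (m + 1) (v i) :=
    fun i m => hfseq_step (m + 1) i
  have hfseq_mono : ∀ {a b : ℕ}, a ≤ b → ∀ j, fseq a (v j) ≤ fseq b (v j) := by
    intro a b hab
    induction b with
    | zero =>
      intro j
      have : a = 0 := Nat.le_zero.mp hab
      subst this; exact le_rfl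
    | succ b ih =>
      intro j
      rcases Nat.lt_or_ge a (b + 1) with h | h
      · exact (ih (Nat.lt_succ_iff.mp h) j).trans (hfseq_step b j)
      · have : a = b + 1 := le_antisymm hab h
        subst this; exact le_rfl
  -- the default sets
  let E : ℕ → Finset (Fin n) := fun m =>
    Finset.univ.filter
      (fun j => alive j ∧ 0 ≤ ξ j ∧ ξ j ≤ cascadeTheta k F gt I (fseq m) (v j))
  have hE_mono : ∀ m, E m ⊆ E (m + 1) := by
    intro m j hj
    simp only [E, Finset.mem_filter, Finset.mem_univ, true_and] at hj ⊢
    exact ⟨hj.1, hj.2.1, hj.2.2.trans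
      (cascadeTheta_mono hFmono hgt (hfseq_step m j))⟩
  -- if two consecutive E's agree, the Δ's agree
  have hE_delta : ∀ m m', E m = E m' → ∀ i, Δ m (v i) = Δ m' (v i) := by
    intro m m' hEE i
    rw [hDelta_eq m, hDelta_eq m', hΞ, cascadeXi_eq lam hlam, cascadeXi_eq lam hlam]
    refine Finset.sum_congr rfl fun j _ => ?_
    have h1 : (alive j ∧ 0 ≤ ξ j ∧ ξ j ≤ cascadeTheta k F gt I (fseq m) (v j))
        ↔ j ∈ E m := by simp [E]
    have h2 : (alive j ∧ 0 ≤ ξ j ∧ ξ j ≤ cascadeTheta k F gt I (fseq m') (v j))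
        ↔ j ∈ E m' := by simp [E]
    have hmem : j ∈ E m ↔ j ∈ E m' := by rw [hEE]
    have hiff := h1.trans (hmem.trans h2.symm)
    exact congrArg _ (if_congr hiff rfl rfl)
  -- pigeonhole: some consecutive pair of E's coincides with index ≤ n
  have hpigeon : ∃ m₀, m₀ ≤ n ∧ E m₀ = E (m₀ + 1) := by
    by_contra hcon
    push_neg at hcon
    have hcard : ∀ m, m ≤ n + 1 → m ≤ (E m).card := by
      intro m
      induction m with
      | zero => intro _; exact Nat.zero_le _
      | succ m ih =>
        intro hm
        have hlt : (E m).card < (E (m + 1)).card :=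
          Finset.card_lt_card (HasSubset.Subset.ssubset_of_ne (hE_mono m)
            (hcon m (by omega)))
        have := ih (by omega)
        omega
    have h1 : n + 1 ≤ (E (n + 1)).card := hcard (n + 1) le_rfl
    have h2 : (E (n + 1)).card ≤ n := by
      simpa using Finset.card_le_card (Finset.subset_univ (E (n + 1)))
    omega
  obtain ⟨m₀, hm₀n, hm₀⟩ := hpigeon
  -- stabilisation: Δ is constant from m₀ on
  have hstab : ∀ p, ∀ i, Δ (m₀ + p) (v i) = Δ m₀ (v i) := by
    intro p
    induction p with
    | zero => intro i; rfl
    | succ p ih =>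
      intro i
      have hΞeq : Δ (m₀ + p + 1) (v i) = Δ (m₀ + 1) (v i) := by
        rw [hDelta_eq (m₀ + p + 1), hDelta_eq (m₀ + 1)]
        exact cascadeXi_congr hFmono hgt lam hlam hlam_nonneg ih i
      have hbase : Δ (m₀ + 1) (v i) = Δ m₀ (v i) := (hE_delta (m₀ + 1) m₀ hm₀.symm i)
      calc Δ (m₀ + (p + 1)) (v i) = Δ (m₀ + p + 1) (v i) := by ring_nf
        _ = Δ (m₀ + 1) (v i) := hΞeq
        _ = Δ m₀ (v i) := hbase
  have hstab' : ∀ m, m₀ ≤ m → ∀ i, Δ m (v i) = Δ m₀ (v i) := by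
    intro m hm i
    obtain ⟨p, rfl⟩ := Nat.exists_eq_add_of_le hm
    exact hstab p i
  refine ⟨part1, ⟨n, le_rfl, ?_, ?_⟩, ?_⟩
  · intro m hm i
    rw [hstab' m (hm₀n.trans hm) i, hstab' n hm₀n i]
  · intro i
    have h1 : Ξ (Δ n) (v i) = Δ (n + 1) (v i) :=
      (congrFun (hDelta_eq (n + 1)) (v i)).symm
    rw [h1, hstab' (n + 1) (by omega) i, hstab' n hm₀n i]
  · intro i
    have h1 : Ξ (Δ n) (v i) = Δ (n + 1) (v i) :=
      (congrFun (hDelta_eq (n + 1)) (v i)).symm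
    rw [h1, hstab' (n + 1) (by omega) i, hstab' n hm₀n i]
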